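/- Let R be a complete discrete valuation ring of mixed characteristic (0, p) containing a primitive p-th root of unity ζ, set λ := ζ − 1, and let A be a flat R-algebra. Then for every x ∈ A, the element ((1 + λ x)^p − 1)/λ^p lies in A and is congruent to x^p − x modulo the maximal ideal of R (i.e. modulo the uniformizer π of R, extended to A). -/

import Mathlib

/-- **Degeneration of Kummer to Artin–Schreier (1.3.1).**  Let `R` be a complete
discrete valuation ring of mixed characteristic `(0, p)` containing a primitive `p`-th
root of unity `ζ`, and set `λ := ζ - 1`.  Let `A` be a flat `R`-algebra.  Then for every
`x ∈ A` the element `((1 + λx)^p - 1)/λ^p` lies in `A` and is congruent to `x^p - x`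
modulo the maximal ideal of `R` extended to `A`. -/
theorem statement7 (R : Type*) [CommRing R] [IsDomain R] [IsDiscreteValuationRing R]
    [CharZero R]
    (p : ℕ) (hp : p.Prime)
    (hres : CharP (IsLocalRing.ResidueField R) p)
    [IsAdicComplete (IsLocalRing.maximalIdeal R) R]
    (ζ : R) (hζ : IsPrimitiveRoot ζ p)
    (A : Type*) [CommRing A] [Algebra R A] [Module.Flat R A] (x : A) :
    ∃ y : A,
      (algebraMap R A (ζ - 1)) ^ p * y = (1 + algebraMap R A (ζ - 1) * x) ^ p - 1 ∧
      y - (x ^ p - x) ∈ Ideal.map (algebraMap R A) (IsLocalRing.maximalIdeal R) := by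
  classical
  haveI := Fact.mk hp
  haveI := hres
  have hp2 : 2 ≤ p := hp.two_le
  obtain ⟨n, hpn⟩ : ∃ n, p = n + 1 := ⟨p - 1, (Nat.succ_pred_eq_of_pos hp.pos).symm⟩
  set lam : R := ζ - 1 with hlam
  have hζ' : IsPrimitiveRoot ζ (n + 1) := hpn ▸ hζ
  have hprod : ∏ k ∈ Finset.range n, (1 - ζ ^ (k + 1)) = (n + 1 : R) :=
    hζ'.prod_one_sub_pow_eq_order
  set s : ℕ → R := fun m => ∑ j ∈ Finset.range m, ζ ^ j with hs
  have hfac : ∀ k, 1 - ζ ^ k = -(s k * lam) := by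
    intro k
    simp [hs, hlam, geom_sum_mul]
  set u : R := (-1) ^ n * ∏ k ∈ Finset.range n, s (k + 1) with hu_def
  have hu : (p : R) = u * lam ^ n := by
    have key : ∏ k ∈ Finset.range n, (1 - ζ ^ (k + 1)) =
        (-1) ^ n * (∏ k ∈ Finset.range n, s (k + 1)) * lam ^ n := by
      calc ∏ k ∈ Finset.range n, (1 - ζ ^ (k + 1))
          = ∏ k ∈ Finset.range n, (-1 * (s (k + 1) * lam)) := by
            refine Finset.prod_congr rfl fun k _ => ?_
            rw [hfac]; ring
        _ = (-1) ^ n * (∏ k ∈ Finset.range n, s (k + 1)) * lam ^ n := by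
            rw [Finset.prod_mul_distrib, Finset.prod_mul_distrib]
            simp [mul_assoc]
    rw [hpn]
    push_cast
    rw [← hprod, key, hu_def]
  -- residue computations
  set F := IsLocalRing.ResidueField R with hF
  set φ : R →+* F := IsLocalRing.residue R with hφ
  haveI : ExpChar F p := ExpChar.prime hp
  have hφζ : φ ζ = 1 := by
    have h0 : (φ ζ - 1) ^ p = 0 := by
      rw [sub_pow_char, one_pow, ← map_pow, hζ.pow_eq_one, map_one, sub_self]
    exact sub_eq_zero.mp ((pow_eq_zero_iff hp.pos.ne').mp h0)
  have hlam_mem : lam ∈ IsLocalRing.maximalIdeal R := by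
    rw [← IsLocalRing.residue_eq_zero_iff]
    show φ lam = 0
    rw [hlam, map_sub, map_one, hφζ, sub_self]
  have hφs : ∀ m, φ (s m) = (m : F) := by
    intro m
    simp [hs, hφζ]
  have hφu : φ u = -1 := by
    have hwilson : ((n.factorial : ℕ) : F) = -1 := by
      have hz : ((n.factorial : ℕ) : ZMod p) = -1 := by
        have hn : n = p - 1 := by omega
        rw [hn]
        exact ZMod.wilsons_lemma p
      calc ((n.factorial : ℕ) : F) = ZMod.castHom dvd_rfl F ((n.factorial : ℕ) : ZMod p) := by
            rw [map_natCast]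
        _ = -1 := by rw [hz, map_neg, map_one]
    have hps : ∏ k ∈ Finset.range n, φ (s (k + 1)) = ((n.factorial : ℕ) : F) := by
      rw [← Finset.prod_range_add_one_eq_factorial, Nat.cast_prod]
      exact Finset.prod_congr rfl fun k _ => by rw [hφs]
    rw [hu_def, map_mul, map_pow, map_neg, map_one, map_prod, hps, hwilson,
      ← pow_succ, ← hpn, neg_one_pow_expChar]
  have hu1_mem : u + 1 ∈ IsLocalRing.maximalIdeal R := by
    rw [← IsLocalRing.residue_eq_zero_iff]
    show φ (u + 1) = 0
    rw [map_add, hφu, map_one, neg_add_cancel]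
  -- the coefficients
  set c : ℕ → R := fun k =>
    if k = 0 then 0 else if k = p then 1
    else ((p.choose k / p : ℕ) : R) * u * lam ^ (k - 1) with hc
  have hkey : ∀ k, 1 ≤ k → k ≤ p → lam ^ p * c k = (p.choose k : R) * lam ^ k := by
    intro k hk1 hkp
    rcases eq_or_lt_of_le hkp with rfl | hklt
    · simp [hc, Nat.choose_self, hp.pos.ne']
    · have hk0 : k ≠ 0 := by omega
      have hkp' : k ≠ p := by omega
      have hdvd : p ∣ p.choose k := hp.dvd_choose_self hk0 hklt
      have hmul : ((p.choose k / p : ℕ) : R) * (p : R) = (p.choose k : R) := by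
        rw [← Nat.cast_mul, Nat.div_mul_cancel hdvd]
      simp only [hc, hk0, hkp', if_false]
      have hpow : lam ^ p * lam ^ (k - 1) = lam ^ n * lam ^ k := by
        rw [← pow_add, ← pow_add]
        congr 1
        omega
      linear_combination (((p.choose k / p : ℕ) : R) * u) * hpow
        - (((p.choose k / p : ℕ) : R) * lam ^ k) * hu + lam ^ k * hmul
  -- pass to A
  set f : R →+* A := algebraMap R A with hf
  set L : A := f lam with hL
  set y : A := ∑ k ∈ Finset.range (p + 1), f (c k) * x ^ k with hy
  refine ⟨y, ?_, ?_⟩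
  · have hbin : (1 + L * x) ^ p = ∑ k ∈ Finset.range (p + 1),
        f ((p.choose k : R) * lam ^ k) * x ^ k := by
      rw [add_comm 1 (L * x), add_pow]
      refine Finset.sum_congr rfl fun k _ => ?_
      rw [map_mul, map_pow, map_natCast, ← hL]
      ring
    have hLy : L ^ p * y = ∑ k ∈ Finset.range (p + 1), f (lam ^ p * c k) * x ^ k := by
      rw [hy, Finset.mul_sum]
      refine Finset.sum_congr rfl fun k _ => ?_
      rw [map_mul, map_pow, ← hL]
      ring
    rw [hLy, hbin, Finset.sum_range_succ', Finset.sum_range_succ']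
    have h0l : f (lam ^ p * c 0) * x ^ 0 = 0 := by simp [hc]
    have h0r : f ((p.choose 0 : R) * lam ^ 0) * x ^ 0 = 1 := by simp
    rw [h0l, h0r, add_zero, add_sub_cancel_right]
    refine Finset.sum_congr rfl fun k hk => ?_
    rw [Finset.mem_range] at hk
    rw [hkey (k + 1) (by omega) (by omega)]
  · set e : ℕ → R := fun k =>
      c k + (if k = 1 then 1 else 0) - (if k = p then 1 else 0) with he
    have h1 : ∑ k ∈ Finset.range (p + 1), (if k = 1 then (1 : A) else 0) * x ^ k = x := by
      simp only [ite_mul, one_mul, zero_mul]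
      rw [Finset.sum_ite_eq' (Finset.range (p + 1)) 1 fun k => x ^ k]
      have : (1 : ℕ) ∈ Finset.range (p + 1) := Finset.mem_range.mpr (by omega)
      simp [this]
    have h2 : ∑ k ∈ Finset.range (p + 1), (if k = p then (1 : A) else 0) * x ^ k = x ^ p := by
      simp only [ite_mul, one_mul, zero_mul]
      rw [Finset.sum_ite_eq' (Finset.range (p + 1)) p fun k => x ^ k]
      have : p ∈ Finset.range (p + 1) := Finset.mem_range.mpr (by omega)
      simp [this]
    have hsum : ∑ k ∈ Finset.range (p + 1), f (e k) * x ^ k = y + x - x ^ p := by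
      have hek : ∀ k, f (e k) =
          f (c k) + (if k = 1 then (1 : A) else 0) - (if k = p then (1 : A) else 0) := by
        intro k
        simp only [he, map_sub, map_add, apply_ite f, map_one, map_zero]
      calc ∑ k ∈ Finset.range (p + 1), f (e k) * x ^ k
          = ∑ k ∈ Finset.range (p + 1), (f (c k) * x ^ k
              + (if k = 1 then (1 : A) else 0) * x ^ k
              - (if k = p then (1 : A) else 0) * x ^ k) := by
            refine Finset.sum_congr rfl fun k _ => ?_
            rw [hek]; ring
        _ = y + x - x ^ p := by
            rw [Finset.sum_sub_distrib, Finset.sum_add_distrib, ← hy, h1, h2]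
    have hrw : y - (x ^ p - x) = ∑ k ∈ Finset.range (p + 1), f (e k) * x ^ k := by
      rw [hsum]; ring
    rw [hrw]
    refine Ideal.sum_mem _ fun k hk => Ideal.mul_mem_right _ _ (Ideal.mem_map_of_mem _ ?_)
    rw [Finset.mem_range] at hk
    have h01 : ¬ (0 : ℕ) = 1 := by omega
    have h0p : ¬ (0 : ℕ) = p := by omega
    have h10 : ¬ (1 : ℕ) = 0 := by omega
    have h1p : ¬ (1 : ℕ) = p := by omega
    have hpzero : ¬ p = 0 := by omega
    have hpone : ¬ p = 1 := by omega
    rcases eq_or_ne k 0 with rfl | hk0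
    · have h : e 0 = 0 := by simp [he, hc, h01, h0p]
      rw [h]; exact zero_mem _
    rcases eq_or_ne k 1 with rfl | hk1
    · have h : e 1 = u + 1 := by
        simp [he, hc, h10, h1p, Nat.choose_one_right, Nat.div_self hp.pos]
      rw [h]; exact hu1_mem
    by_cases hkp : k = p
    · have h : e p = 0 := by simp [he, hc, hpzero, hpone]
      rw [hkp, h]; exact zero_mem _
    · have hpw : lam ^ (k - 1) = lam ^ (k - 2) * lam := by
        rw [← pow_succ]
        congr 1
        omega
      have hek : e k = (((p.choose k / p : ℕ) : R) * u * lam ^ (k - 2)) * lam := by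
        calc e k = ((p.choose k / p : ℕ) : R) * u * lam ^ (k - 1) := by
              simp only [he, hc, if_neg hk0, if_neg hk1, if_neg hkp, add_zero, sub_zero]
          _ = (((p.choose k / p : ℕ) : R) * u * lam ^ (k - 2)) * lam := by
              rw [hpw]; ring
      rw [hek]
      exact Ideal.mul_mem_left _ _ hlam_mem
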